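/- Differential equation for Euler's perimeter series: the function s : (−1,1) → ℝ defined by s(x) = 1 − Σ_{k=1}^{∞} c_k · x^{2k}, where (c_k) are Euler's perimeter-series coefficients, is twice differentiable on (−1,1) and satisfies 4·x·s''(x) + 4·s'(x) + x·s(x)/(1 − x²) = 0 for all x ∈ (−1,1). -/

import Mathlib

/-- Euler's perimeter-series coefficients: `c₁ = 1/16` and
`c_{k+1} = c_k · ((4k−1)·(4k+1))/((4·(k+1))²)`. (The value at `0` is irrelevant.) -/
noncomputable def eulerCoeff : ℕ → ℝ
  | 0 => 0
  | 1 => 1 / 16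
  | (k + 2) =>
      eulerCoeff (k + 1) *
        ((4 * ((k : ℝ) + 1) - 1) * (4 * ((k : ℝ) + 1) + 1)) / (4 * ((k : ℝ) + 2)) ^ 2

/-- Euler's perimeter series `s(x) = 1 − Σ_{k≥1} c_k x^{2k}`. -/
noncomputable def eulerSeries (x : ℝ) : ℝ :=
  1 - ∑' k : ℕ, eulerCoeff (k + 1) * x ^ (2 * (k + 1))

/-- E563 §6: Euler's perimeter series is twice differentiable on `(−1,1)` and
satisfies the differential equation `4x·s''(x) + 4·s'(x) + x·s(x)/(1−x²) = 0`. -/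

noncomputable def eA : ℕ → ℝ := fun k => if k = 0 then 1 else -eulerCoeff k

lemma eulerCoeff_pos_le : ∀ k : ℕ, 0 < eulerCoeff (k+1) ∧ eulerCoeff (k+1) ≤ 1/16 := by
  intro k
  induction k with
  | zero => norm_num [eulerCoeff]
  | succ n ih =>
    obtain ⟨h1, h2⟩ := ih
    have hnum : (0:ℝ) < (4 * ((n : ℝ) + 1) - 1) * (4 * ((n : ℝ) + 1) + 1) := by
      have : (0:ℝ) ≤ (n:ℝ) := Nat.cast_nonneg n
      nlinarith
    have hden : (0:ℝ) < (4 * ((n : ℝ) + 2)) ^ 2 := by positivity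
    constructor
    · rw [show n+1+1 = n+2 from rfl, eulerCoeff]
      positivity
    · show eulerCoeff (n+1+1) ≤ 1/16
      rw [eulerCoeff]
      rw [div_le_iff₀ hden]
      have : (0:ℝ) ≤ (n:ℝ) := Nat.cast_nonneg n
      nlinarith

lemma eA_abs_le (k : ℕ) : |eA k| ≤ 1 := by
  rcases k with _ | n
  · simp [eA]
  · have := eulerCoeff_pos_le n
    simp only [eA, Nat.succ_ne_zero, if_false, abs_neg]
    rw [abs_of_pos this.1]
    linarith [this.2]

lemma eA_rec (k : ℕ) : 16 * ((k:ℝ)+1)^2 * eA (k+1) = (16*(k:ℝ)^2 - 1) * eA k := by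
  rcases k with _ | j
  · norm_num [eA, eulerCoeff]
  · have hden : ((4 * ((j : ℝ) + 2)) ^ 2) ≠ 0 := by positivity
    simp only [eA, Nat.succ_ne_zero, if_false]
    rw [show j+1+1 = j+2 from rfl, eulerCoeff]
    push_cast
    field_simp
    ring

lemma summable_poly_geom {t : ℝ} (ht0 : 0 ≤ t) (ht : t < 1) :
    Summable (fun k : ℕ => (16*(k:ℝ)^2 + 1) * t^(k-1)) := by
  rw [← summable_nat_add_iff 1]
  have hn : ‖t‖ < 1 := by rwa [Real.norm_eq_abs, abs_of_nonneg ht0]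
  have h2 : Summable (fun n : ℕ => (n:ℝ)^2 * t^n) :=
    summable_pow_mul_geometric_of_norm_lt_one 2 hn
  have h1 : Summable (fun n : ℕ => (n:ℝ)^1 * t^n) :=
    summable_pow_mul_geometric_of_norm_lt_one 1 hn
  have h0 : Summable (fun n : ℕ => t^n) := summable_geometric_of_lt_one ht0 ht
  have := ((h2.mul_left 16).add ((h1.mul_left 32).add (h0.mul_left 17)))
  apply this.congr
  intro k
  simp only [Nat.add_sub_cancel]
  push_cast
  ring

lemma bound_aux {C r y : ℝ} {k e : ℕ} (hC : |C| ≤ 16*(k:ℝ)^2 + 1) (he : k - 1 ≤ e)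
    (h1 : r ≤ 1) (hy : |y| ≤ r) : ‖C * y ^ e‖ ≤ (16*(k:ℝ)^2 + 1) * r^(k-1) := by
  have h0 : (0:ℝ) ≤ r := le_trans (abs_nonneg y) hy
  rw [norm_mul, Real.norm_eq_abs, Real.norm_eq_abs, abs_pow]
  have hp : |y|^e ≤ r^(k-1) :=
    le_trans (pow_le_pow_left₀ (abs_nonneg y) hy e) (pow_le_pow_of_le_one h0 h1 he)
  exact mul_le_mul hC hp (pow_nonneg (abs_nonneg y) e) (by positivity)

lemma summable_of_bound (C : ℕ → ℝ) (e : ℕ → ℕ) (hC : ∀ k, |C k| ≤ 16*(k:ℝ)^2 + 1)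
    (he : ∀ k, k - 1 ≤ e k) {y : ℝ} (hy : |y| < 1) :
    Summable (fun k => C k * y ^ (e k)) := by
  apply Summable.of_norm_bounded (summable_poly_geom (abs_nonneg y) hy)
  intro k
  exact bound_aux (hC k) (he k) hy.le le_rfl

lemma eA_abs_le' (k : ℕ) : |eA k| ≤ 16*(k:ℝ)^2 + 1 := by
  have h := eA_abs_le k
  have : (0:ℝ) ≤ (k:ℝ)^2 := by positivity
  linarith

lemma coef1_abs_le (k : ℕ) : |eA k * ((2*k : ℕ):ℝ)| ≤ 16*(k:ℝ)^2 + 1 := by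
  rw [abs_mul]
  have h := eA_abs_le k
  have h2 : |((2*k:ℕ):ℝ)| = 2*(k:ℝ) := by
    rw [abs_of_nonneg (by positivity)]; push_cast; ring
  rw [h2]
  nlinarith [abs_nonneg (eA k), (by positivity : (0:ℝ) ≤ (k:ℝ))]

lemma coef2_abs_le (k : ℕ) : |eA k * ((2*k : ℕ):ℝ) * ((2*k-1 : ℕ):ℝ)| ≤ 16*(k:ℝ)^2 + 1 := by
  rw [abs_mul, abs_mul]
  have h := eA_abs_le k
  have h2 : |((2*k:ℕ):ℝ)| = 2*(k:ℝ) := by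
    rw [abs_of_nonneg (by positivity)]; push_cast; ring
  have h3 : |((2*k-1:ℕ):ℝ)| ≤ 2*(k:ℝ) := by
    rw [abs_of_nonneg (by positivity)]
    have : (2*k-1:ℕ) ≤ 2*k := by omega
    calc ((2*k-1:ℕ):ℝ) ≤ ((2*k:ℕ):ℝ) := by exact_mod_cast this
    _ = 2*(k:ℝ) := by push_cast; ring
  rw [h2]
  have hk : (0:ℝ) ≤ (k:ℝ) := Nat.cast_nonneg k
  have h4 : |eA k| * (2*(k:ℝ)) ≤ 2*(k:ℝ) := by nlinarith [abs_nonneg (eA k)]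
  calc |eA k| * (2*(k:ℝ)) * |((2*k-1:ℕ):ℝ)|
      ≤ (2*(k:ℝ)) * (2*(k:ℝ)) := by
        apply mul_le_mul h4 h3 (abs_nonneg _) (by positivity)
    _ ≤ 16*(k:ℝ)^2 + 1 := by nlinarith

lemma hd1 (k : ℕ) (y : ℝ) :
    HasDerivAt (fun z => eA k * z ^ (2*k)) (eA k * ((2*k:ℕ):ℝ) * y ^ (2*k-1)) y := by
  simpa [mul_assoc] using (hasDerivAt_pow (2*k) y).const_mul (eA k)

lemma hd2 (k : ℕ) (y : ℝ) :
    HasDerivAt (fun z => (eA k * ((2*k:ℕ):ℝ)) * z ^ (2*k-1))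
      (eA k * ((2*k:ℕ):ℝ) * ((2*k-1:ℕ):ℝ) * y ^ (2*k-2)) y := by
  have h := (hasDerivAt_pow (2*k-1) y).const_mul (eA k * ((2*k:ℕ):ℝ))
  have he : 2*k-1-1 = 2*k-2 := by omega
  rw [he] at h
  simpa [mul_assoc] using h

lemma hasDerivAt_S0 {x : ℝ} (hx : |x| < 1) :
    HasDerivAt (fun y => ∑' k : ℕ, eA k * y ^ (2*k))
      (∑' k : ℕ, (eA k * ((2*k:ℕ):ℝ)) * x ^ (2*k-1)) x := by
  set r : ℝ := (|x| + 1)/2 with hr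
  have hr0 : 0 ≤ r := by positivity
  have hr1 : r < 1 := by rw [hr]; linarith
  have hxr : |x| < r := by rw [hr]; linarith [abs_nonneg x]
  have hmem : x ∈ Set.Ioo (-r) r := by rwa [Set.mem_Ioo, ← abs_lt]
  have := hasDerivAt_tsum_of_isPreconnected
    (u := fun (k:ℕ) => (16*(k:ℝ)^2 + 1) * r^(k-1))
    (summable_poly_geom hr0 hr1) isOpen_Ioo (convex_Ioo (-r) r).isPreconnected
    (g := fun (k:ℕ) (z:ℝ) => eA k * z ^ (2*k))
    (g' := fun (k:ℕ) (z:ℝ) => (eA k * ((2*k:ℕ):ℝ)) * z ^ (2*k-1))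
    (fun k y _ => by simpa [mul_assoc] using hd1 k y)
    (fun k y hy => bound_aux (coef1_abs_le k) (by omega) hr1.le (abs_le.mpr ⟨hy.1.le, hy.2.le⟩))
    hmem
    (summable_of_bound _ (fun k => 2*k) eA_abs_le' (fun k => by show k-1 ≤ 2*k; omega) hx)
    hmem
  exact this

lemma hasDerivAt_S1 {x : ℝ} (hx : |x| < 1) :
    HasDerivAt (fun y => ∑' k : ℕ, (eA k * ((2*k:ℕ):ℝ)) * y ^ (2*k-1))
      (∑' k : ℕ, (eA k * ((2*k:ℕ):ℝ) * ((2*k-1:ℕ):ℝ)) * x ^ (2*k-2)) x := by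
  set r : ℝ := (|x| + 1)/2 with hr
  have hr0 : 0 ≤ r := by positivity
  have hr1 : r < 1 := by rw [hr]; linarith
  have hxr : |x| < r := by rw [hr]; linarith [abs_nonneg x]
  have hmem : x ∈ Set.Ioo (-r) r := by rwa [Set.mem_Ioo, ← abs_lt]
  have := hasDerivAt_tsum_of_isPreconnected
    (u := fun (k:ℕ) => (16*(k:ℝ)^2 + 1) * r^(k-1))
    (summable_poly_geom hr0 hr1) isOpen_Ioo (convex_Ioo (-r) r).isPreconnected
    (g := fun (k:ℕ) (z:ℝ) => (eA k * ((2*k:ℕ):ℝ)) * z ^ (2*k-1))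
    (g' := fun (k:ℕ) (z:ℝ) => (eA k * ((2*k:ℕ):ℝ) * ((2*k-1:ℕ):ℝ)) * z ^ (2*k-2))
    (fun k y _ => by simpa [mul_assoc] using hd2 k y)
    (fun k y hy => bound_aux (coef2_abs_le k) (by omega) hr1.le (abs_le.mpr ⟨hy.1.le, hy.2.le⟩))
    hmem
    (summable_of_bound _ (fun k => 2*k-1) coef1_abs_le (fun k => by show k-1 ≤ 2*k-1; omega) hx)
    hmem
  exact this
lemma euler_eq_S0 {y : ℝ} (hy : |y| < 1) :
    eulerSeries y = ∑' k : ℕ, eA k * y ^ (2*k) := by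
  have hs : Summable (fun k : ℕ => eA k * y ^ (2*k)) :=
    summable_of_bound _ (fun k => 2*k) eA_abs_le' (fun k => by show k-1 ≤ 2*k; omega) hy
  rw [Summable.tsum_eq_zero_add hs]
  have h0 : eA 0 * y ^ (2*0) = 1 := by simp [eA]
  have h1 : ∀ k : ℕ, eA (k+1) * y ^ (2*(k+1)) = -(eulerCoeff (k+1) * y ^ (2*(k+1))) := by
    intro k; simp [eA]
  rw [h0, tsum_congr h1, tsum_neg, eulerSeries]
  ring

lemma algebra_lemma {x : ℝ} (hx : |x| < 1) :
    4 * x * (∑' k : ℕ, (eA k * ((2*k:ℕ):ℝ) * ((2*k-1:ℕ):ℝ)) * x ^ (2*k-2))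
      + 4 * (∑' k : ℕ, (eA k * ((2*k:ℕ):ℝ)) * x ^ (2*k-1))
      + x * (∑' k : ℕ, eA k * x ^ (2*k)) / (1 - x^2) = 0 := by
  have hTc : ∀ k : ℕ, |16*(k:ℝ)^2 * eA k| ≤ 16*(k:ℝ)^2 + 1 := by
    intro k
    rw [abs_mul, abs_of_nonneg (by positivity : (0:ℝ) ≤ 16*(k:ℝ)^2)]
    nlinarith [eA_abs_le k, abs_nonneg (eA k), (by positivity : (0:ℝ) ≤ 16*(k:ℝ)^2)]
  have hEc : ∀ k : ℕ, |(16*(k:ℝ)^2 - 1) * eA k| ≤ 16*(k:ℝ)^2 + 1 := by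
    intro k
    rw [abs_mul]
    have h1 : |16*(k:ℝ)^2 - 1| ≤ 16*(k:ℝ)^2 + 1 := by
      rw [abs_le]; constructor <;> nlinarith [(by positivity : (0:ℝ) ≤ 16*(k:ℝ)^2)]
    nlinarith [eA_abs_le k, abs_nonneg (eA k), abs_nonneg (16*(k:ℝ)^2 - 1),
      (by positivity : (0:ℝ) ≤ 16*(k:ℝ)^2)]
  have sT : Summable (fun k : ℕ => (16*(k:ℝ)^2 * eA k) * x ^ (2*k-1)) :=
    summable_of_bound _ (fun k => 2*k-1) hTc (fun k => by show k-1 ≤ 2*k-1; omega) hx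
  have sE : Summable (fun k : ℕ => ((16*(k:ℝ)^2 - 1) * eA k) * x ^ (2*k+1)) :=
    summable_of_bound _ (fun k => 2*k+1) hEc (fun k => by show k-1 ≤ 2*k+1; omega) hx
  have sB : Summable (fun k : ℕ => (16*(k:ℝ)^2 * eA k) * x ^ (2*k+1)) :=
    summable_of_bound _ (fun k => 2*k+1) hTc (fun k => by show k-1 ≤ 2*k+1; omega) hx
  have sC : Summable (fun k : ℕ => eA k * x ^ (2*k+1)) :=
    summable_of_bound _ (fun k => 2*k+1) eA_abs_le' (fun k => by show k-1 ≤ 2*k+1; omega) hx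
  have s1 : Summable (fun k : ℕ => (eA k * ((2*k:ℕ):ℝ)) * x ^ (2*k-1)) :=
    summable_of_bound _ (fun k => 2*k-1) coef1_abs_le (fun k => by show k-1 ≤ 2*k-1; omega) hx
  have s2 : Summable (fun k : ℕ => (eA k * ((2*k:ℕ):ℝ) * ((2*k-1:ℕ):ℝ)) * x ^ (2*k-2)) :=
    summable_of_bound _ (fun k => 2*k-2) coef2_abs_le (fun k => by show k-1 ≤ 2*k-2; omega) hx
  -- Step A : 4x·S2 + 4·S1 = ∑ T
  have stepA : 4 * x * (∑' k : ℕ, (eA k * ((2*k:ℕ):ℝ) * ((2*k-1:ℕ):ℝ)) * x ^ (2*k-2))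
      + 4 * (∑' k : ℕ, (eA k * ((2*k:ℕ):ℝ)) * x ^ (2*k-1))
      = ∑' k : ℕ, (16*(k:ℝ)^2 * eA k) * x ^ (2*k-1) := by
    rw [← tsum_mul_left (a := 4*x), ← tsum_mul_left (a := (4:ℝ)),
      ← Summable.tsum_add (s2.mul_left (4*x)) (s1.mul_left 4)]
    apply tsum_congr
    intro k
    rcases k with _ | m
    · simp
    · have e1 : 2*(m+1)-2 = 2*m := by omega
      have e2 : 2*(m+1)-1 = 2*m+1 := by omega
      rw [e1, e2]
      push_cast [e2]
      ring
  -- Step B : ∑ T = ∑ (16k²−1)·a_k·x^(2k+1)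
  have stepB : (∑' k : ℕ, (16*(k:ℝ)^2 * eA k) * x ^ (2*k-1))
      = ∑' k : ℕ, ((16*(k:ℝ)^2 - 1) * eA k) * x ^ (2*k+1) := by
    rw [Summable.tsum_eq_zero_add sT]
    simp only [Nat.cast_zero]
    norm_num
    apply tsum_congr
    intro k
    have e1 : 2*(k+1)-1 = 2*k+1 := by omega
    rw [e1]
    push_cast
    rw [show (16 * ((k:ℝ) + 1) ^ 2 * eA (k + 1)) = 16 * ((k:ℝ)+1)^2 * eA (k+1) from rfl,
      eA_rec k]
  -- Step C
  have hx2 : 1 - x^2 ≠ 0 := by nlinarith [abs_nonneg x, sq_abs x, abs_lt.mp hx]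
  have hxg : x * (∑' k : ℕ, eA k * x ^ (2*k)) = ∑' k : ℕ, eA k * x ^ (2*k+1) := by
    rw [← tsum_mul_left (a := x)]
    apply tsum_congr; intro k; ring
  have hx2T : x^2 * (∑' k : ℕ, (16*(k:ℝ)^2 * eA k) * x ^ (2*k-1))
      = ∑' k : ℕ, (16*(k:ℝ)^2 * eA k) * x ^ (2*k+1) := by
    rw [← tsum_mul_left (a := x^2)]
    apply tsum_congr; intro k
    rcases k with _ | m
    · simp
    · have e1 : 2*(m+1)-1 = 2*m+1 := by omega
      rw [e1]; ring
  have key : (1 - x^2) * ((∑' k : ℕ, (16*(k:ℝ)^2 * eA k) * x ^ (2*k-1)))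
      + x * (∑' k : ℕ, eA k * x ^ (2*k)) = 0 := by
    have comb : (∑' k : ℕ, ((16*(k:ℝ)^2 - 1) * eA k) * x ^ (2*k+1))
        + (∑' k : ℕ, eA k * x ^ (2*k+1))
        = ∑' k : ℕ, (16*(k:ℝ)^2 * eA k) * x ^ (2*k+1) := by
      rw [← Summable.tsum_add sE sC]
      apply tsum_congr; intro k; ring
    rw [sub_mul, one_mul, hxg, hx2T, stepB]
    linarith [comb]
  rw [stepA]
  rw [add_div' _ _ _ hx2, mul_comm _ (1 - x^2), key, zero_div]

theorem euler_series_differential_equation :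
    ∀ x ∈ Set.Ioo (-1 : ℝ) 1,
      DifferentiableAt ℝ eulerSeries x ∧
      DifferentiableAt ℝ (deriv eulerSeries) x ∧
      4 * x * deriv (deriv eulerSeries) x + 4 * deriv eulerSeries x
        + x * eulerSeries x / (1 - x ^ 2) = 0 := by
  intro x hx
  have hx' : |x| < 1 := abs_lt.mpr ⟨hx.1, hx.2⟩
  have hev : ∀ y ∈ Set.Ioo (-1:ℝ) 1, eulerSeries y = ∑' k : ℕ, eA k * y ^ (2*k) :=
    fun y hy => euler_eq_S0 (abs_lt.mpr ⟨hy.1, hy.2⟩)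
  have hnhds : Set.Ioo (-1:ℝ) 1 ∈ nhds x := isOpen_Ioo.mem_nhds hx
  have hD0 : ∀ y ∈ Set.Ioo (-1:ℝ) 1,
      HasDerivAt eulerSeries (∑' k : ℕ, (eA k * ((2*k:ℕ):ℝ)) * y ^ (2*k-1)) y := by
    intro y hy
    exact (hasDerivAt_S0 (abs_lt.mpr ⟨hy.1, hy.2⟩)).congr_of_eventuallyEq
      (Filter.eventuallyEq_of_mem (isOpen_Ioo.mem_nhds hy) (fun z hz => hev z hz))
  have hEq1 : deriv eulerSeries =ᶠ[nhds x]
      (fun y => ∑' k : ℕ, (eA k * ((2*k:ℕ):ℝ)) * y ^ (2*k-1)) :=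
    Filter.eventuallyEq_of_mem hnhds (fun y hy => (hD0 y hy).deriv)
  have hD1 : HasDerivAt (deriv eulerSeries)
      (∑' k : ℕ, (eA k * ((2*k:ℕ):ℝ) * ((2*k-1:ℕ):ℝ)) * x ^ (2*k-2)) x :=
    (hasDerivAt_S1 hx').congr_of_eventuallyEq hEq1
  refine ⟨(hD0 x hx).differentiableAt, hD1.differentiableAt, ?_⟩
  rw [hD1.deriv, (hD0 x hx).deriv, euler_eq_S0 hx']
  exact algebra_lemma hx'
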